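/- Let F be a light-tailed probability distribution on ℝ with right-unbounded support. Then there exist two heavy-tailed probability distributions H₁ and H₂ on ℝ such that, for independent random variables ξ₁ with distribution H₁ and ξ₂ with distribution H₂, the random variable min(ξ₁, ξ₂) has distribution F. -/

import Mathlib

open MeasureTheory ProbabilityTheory Filter

open scoped NNReal ENNReal Topology

namespace HeavyMinAux

open Set

/-- The union of blocks `[b n, b (n+1))` over indices selected by `σ`. -/
def Eset (b : ℕ → ℝ) (σ : ℕ → Prop) : Set ℝ := ⋃ n ∈ {n | σ n}, Set.Ico (b n) (b (n + 1))

lemma Eset_meas (b : ℕ → ℝ) (σ : ℕ → Prop) : MeasurableSet (Eset b σ) :=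
  MeasurableSet.biUnion (to_countable _) fun _ _ => measurableSet_Ico

/-- `g b σ t` is the Lebesgue measure of `Eset b σ ∩ [0, t)`. -/
noncomputable def g (b : ℕ → ℝ) (σ : ℕ → Prop) (t : ℝ) : ℝ :=
  (volume (Eset b σ ∩ Set.Ico 0 t)).toReal

lemma vol_le (b : ℕ → ℝ) (σ : ℕ → Prop) (t : ℝ) :
    volume (Eset b σ ∩ Set.Ico 0 t) ≤ ENNReal.ofReal t := by
  refine le_trans (measure_mono inter_subset_right) ?_
  rw [Real.volume_Ico]
  exact ENNReal.ofReal_le_ofReal (by linarith)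

lemma vol_ne_top (b : ℕ → ℝ) (σ : ℕ → Prop) (t : ℝ) :
    volume (Eset b σ ∩ Set.Ico 0 t) ≠ ⊤ :=
  ne_top_of_le_ne_top ENNReal.ofReal_ne_top (vol_le b σ t)

lemma g_nonneg (b : ℕ → ℝ) (σ : ℕ → Prop) (t : ℝ) : 0 ≤ g b σ t :=
  ENNReal.toReal_nonneg

lemma g_le (b : ℕ → ℝ) (σ : ℕ → Prop) (t : ℝ) : g b σ t ≤ t ∨ t < 0 := by
  rcases lt_or_ge t 0 with h | h
  · exact Or.inr h
  · left
    have := vol_le b σ t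
    have h2 := ENNReal.toReal_mono ENNReal.ofReal_ne_top this
    rwa [ENNReal.toReal_ofReal h] at h2

lemma g_le_of_nonneg (b : ℕ → ℝ) (σ : ℕ → Prop) {t : ℝ} (ht : 0 ≤ t) : g b σ t ≤ t := by
  rcases g_le b σ t with h | h
  · exact h
  · linarith

lemma g_mono (b : ℕ → ℝ) (σ : ℕ → Prop) : Monotone (g b σ) := by
  intro s t hst
  exact ENNReal.toReal_mono (vol_ne_top b σ t)
    (measure_mono (inter_subset_inter_right _ (Ico_subset_Ico le_rfl hst)))

lemma g_lip (b : ℕ → ℝ) (σ : ℕ → Prop) {s t : ℝ} (hst : s ≤ t) :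
    g b σ t ≤ g b σ s + (t - s) := by
  have hsub : Eset b σ ∩ Set.Ico 0 t ⊆ (Eset b σ ∩ Set.Ico 0 s) ∪ Set.Ico s t := by
    rintro x ⟨hx, hx0, hxt⟩
    rcases lt_or_ge x s with h | h
    · exact Or.inl ⟨hx, hx0, h⟩
    · exact Or.inr ⟨h, hxt⟩
  have h1 : volume (Eset b σ ∩ Set.Ico 0 t) ≤
      volume (Eset b σ ∩ Set.Ico 0 s) + volume (Set.Ico s t) :=
    le_trans (measure_mono hsub) (measure_union_le _ _)
  have h2 := ENNReal.toReal_mono (by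
      refine ENNReal.add_ne_top.2 ⟨vol_ne_top b σ s, ?_⟩
      rw [Real.volume_Ico]; exact ENNReal.ofReal_ne_top) h1
  rw [ENNReal.toReal_add (vol_ne_top b σ s) (by rw [Real.volume_Ico]; exact ENNReal.ofReal_ne_top),
    Real.volume_Ico, ENNReal.toReal_ofReal (by linarith)] at h2
  exact h2

lemma g_lipschitz (b : ℕ → ℝ) (σ : ℕ → Prop) : LipschitzWith 1 (g b σ) := by
  refine LipschitzWith.of_dist_le_mul fun s t => ?_
  have h1 : ((1 : ℝ≥0) : ℝ) * dist s t = dist s t := by norm_num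
  rw [h1, Real.dist_eq, Real.dist_eq]
  rcases le_total s t with h | h
  · rw [abs_of_nonpos (by linarith [g_mono b σ h] : g b σ s - g b σ t ≤ 0),
      abs_of_nonpos (by linarith)]
    have := g_lip b σ h; linarith
  · rw [abs_of_nonneg (by linarith [g_mono b σ h] : 0 ≤ g b σ s - g b σ t),
      abs_of_nonneg (by linarith)]
    have := g_lip b σ h; linarith

lemma g_zero (b : ℕ → ℝ) (σ : ℕ → Prop) {t : ℝ} (ht : t ≤ 0) : g b σ t = 0 := by
  unfold g
  rw [Ico_eq_empty (by simpa using ht), inter_empty, measure_empty, ENNReal.toReal_zero]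

section blocks

variable {b : ℕ → ℝ}

lemma b_strictMono (hb : ∀ n, b n + 1 ≤ b (n + 1)) : StrictMono b :=
  strictMono_nat_of_lt_succ fun n => by linarith [hb n]

lemma b_ge (hb0 : b 0 = 0) (hb : ∀ n, b n + 1 ≤ b (n + 1)) (n : ℕ) : (n : ℝ) ≤ b n := by
  induction n with
  | zero => simp [hb0]
  | succ n ih => push_cast; linarith [hb n]

lemma blocks_disjoint (hb : ∀ n, b n + 1 ≤ b (n + 1)) {n m : ℕ} (hnm : n ≠ m) :
    Disjoint (Set.Ico (b n) (b (n + 1))) (Set.Ico (b m) (b (m + 1))) := by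
  have hmono := (b_strictMono hb).monotone
  rw [Set.disjoint_left]
  rintro x ⟨hx1, hx2⟩ ⟨hy1, hy2⟩
  rcases hnm.lt_or_gt with h | h
  · have : b (n + 1) ≤ b m := hmono (by omega)
    linarith
  · have : b (m + 1) ≤ b n := hmono (by omega)
    linarith

lemma exists_block (hb0 : b 0 = 0) (hb : ∀ n, b n + 1 ≤ b (n + 1)) {x : ℝ} (hx : 0 ≤ x) :
    ∃ n, b n ≤ x ∧ x < b (n + 1) := by
  obtain ⟨N, hN⟩ := exists_nat_gt x
  have hex : ∃ n, x < b n := ⟨N, lt_of_lt_of_le hN (b_ge hb0 hb N)⟩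
  classical
  have hn : x < b (Nat.find hex) := Nat.find_spec hex
  have hn0 : Nat.find hex ≠ 0 := by
    intro h
    rw [h, hb0] at hn
    exact absurd hn (not_lt.2 hx)
  obtain ⟨m, hm⟩ := Nat.exists_eq_succ_of_ne_zero hn0
  refine ⟨m, ?_, by rw [← Nat.succ_eq_add_one, ← hm]; exact hn⟩
  have := Nat.find_min hex (m := m) (by omega)
  push_neg at this
  exact this


lemma Eset_subset_block_union (σ : ℕ → Prop) :
    Eset b σ ⊆ ⋃ n, Set.Ico (b n) (b (n + 1)) := by
  intro x hx
  obtain ⟨n, _, hn⟩ := Set.mem_iUnion₂.1 hx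
  exact Set.mem_iUnion.2 ⟨n, hn⟩

/-- flatness: if `¬ σ n` then `g b σ` is constant on `[b n, b (n+1)]`. -/
lemma g_flat (hb : ∀ n, b n + 1 ≤ b (n + 1)) {σ : ℕ → Prop} {n : ℕ} (hσ : ¬ σ n)
    {t : ℝ} (h1 : b n ≤ t) (h2 : t ≤ b (n + 1)) : g b σ t = g b σ (b n) := by
  have hset : Eset b σ ∩ Set.Ico 0 t = Eset b σ ∩ Set.Ico 0 (b n) := by
    apply Set.Subset.antisymm
    · rintro x ⟨hxE, hx0, hxt⟩
      refine ⟨hxE, hx0, ?_⟩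
      by_contra hge
      push_neg at hge
      obtain ⟨m, hm, hmx⟩ := Set.mem_iUnion₂.1 hxE
      have hmn : m ≠ n := fun h => hσ (h ▸ hm)
      have := Set.disjoint_left.1 (blocks_disjoint hb hmn) hmx
      exact this ⟨hge, lt_of_lt_of_le hxt h2⟩
    · exact Set.inter_subset_inter_right _ (Set.Ico_subset_Ico le_rfl h1)
  unfold g
  rw [hset]

/-- complementary additivity: `g b σ t + g b (¬σ) t = t` for `t ≥ 0`. -/
lemma g_add (hb0 : b 0 = 0) (hb : ∀ n, b n + 1 ≤ b (n + 1)) (σ : ℕ → Prop) {t : ℝ}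
    (ht : 0 ≤ t) : g b σ t + g b (fun n => ¬ σ n) t = t := by
  classical
  have hdisj : Disjoint (Eset b σ ∩ Set.Ico 0 t) (Eset b (fun n => ¬ σ n) ∩ Set.Ico 0 t) := by
    rw [Set.disjoint_left]
    rintro x ⟨hx1, _⟩ ⟨hx2, _⟩
    obtain ⟨n, hn, hnx⟩ := Set.mem_iUnion₂.1 hx1
    obtain ⟨m, hm, hmx⟩ := Set.mem_iUnion₂.1 hx2
    have hnm : n ≠ m := fun h => hm (h ▸ hn)
    exact Set.disjoint_left.1 (blocks_disjoint hb hnm) hnx hmx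
  have hcover : (Eset b σ ∩ Set.Ico 0 t) ∪ (Eset b (fun n => ¬ σ n) ∩ Set.Ico 0 t)
      = Set.Ico 0 t := by
    apply Set.Subset.antisymm
    · rintro x (⟨_, hx⟩ | ⟨_, hx⟩) <;> exact hx
    · rintro x ⟨hx0, hxt⟩
      obtain ⟨n, hn1, hn2⟩ := exists_block hb0 hb hx0
      by_cases hσn : σ n
      · exact Or.inl ⟨Set.mem_iUnion₂.2 ⟨n, hσn, hn1, hn2⟩, hx0, hxt⟩
      · exact Or.inr ⟨Set.mem_iUnion₂.2 ⟨n, hσn, hn1, hn2⟩, hx0, hxt⟩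
  have hvol : volume (Eset b σ ∩ Set.Ico 0 t) + volume (Eset b (fun n => ¬ σ n) ∩ Set.Ico 0 t)
      = ENNReal.ofReal t := by
    rw [← measure_union hdisj ((Eset_meas b _).inter measurableSet_Ico), hcover,
      Real.volume_Ico, sub_zero]
  have := congrArg ENNReal.toReal hvol
  rwa [ENNReal.toReal_add (vol_ne_top b _ t) (vol_ne_top b _ t),
    ENNReal.toReal_ofReal ht] at this

/-- growth: each selected block adds its full length to `g`. -/
lemma g_block_growth (hb0 : b 0 = 0) (hb : ∀ n, b n + 1 ≤ b (n + 1)) {σ : ℕ → Prop}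
    {n : ℕ} (hσ : σ n) : g b σ (b n) + 1 ≤ g b σ (b (n + 1)) := by
  have hbn : (0 : ℝ) ≤ b n := le_trans (Nat.cast_nonneg n) (b_ge hb0 hb n)
  have hsub : (Eset b σ ∩ Set.Ico 0 (b n)) ∪ Set.Ico (b n) (b (n + 1))
      ⊆ Eset b σ ∩ Set.Ico 0 (b (n + 1)) := by
    rintro x (⟨hxE, hx0, hxt⟩ | ⟨hx1, hx2⟩)
    · exact ⟨hxE, hx0, lt_of_lt_of_le hxt (by linarith [hb n])⟩
    · exact ⟨Set.mem_iUnion₂.2 ⟨n, hσ, hx1, hx2⟩, le_trans hbn hx1, hx2⟩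
  have hdisj : Disjoint (Eset b σ ∩ Set.Ico 0 (b n)) (Set.Ico (b n) (b (n + 1))) := by
    rw [Set.disjoint_left]
    rintro x ⟨_, _, hxn⟩ ⟨hx1, _⟩
    linarith
  have hm : volume (Eset b σ ∩ Set.Ico 0 (b n)) + volume (Set.Ico (b n) (b (n + 1)))
      ≤ volume (Eset b σ ∩ Set.Ico 0 (b (n + 1))) := by
    rw [← measure_union hdisj measurableSet_Ico]
    exact measure_mono hsub
  have hIco : volume (Set.Ico (b n) (b (n + 1))) = ENNReal.ofReal (b (n + 1) - b n) := by
    rw [Real.volume_Ico]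
  have h2 := ENNReal.toReal_mono (vol_ne_top b σ (b (n + 1))) hm
  rw [ENNReal.toReal_add (vol_ne_top b σ (b n)) (by rw [hIco]; exact ENNReal.ofReal_ne_top),
    hIco, ENNReal.toReal_ofReal (by linarith [hb n])] at h2
  have : (1 : ℝ) ≤ b (n + 1) - b n := by linarith [hb n]
  unfold g
  linarith [h2]

lemma g_unbounded (hb0 : b 0 = 0) (hb : ∀ n, b n + 1 ≤ b (n + 1)) {σ : ℕ → Prop}
    (hσ : ∀ n, ∃ m, n ≤ m ∧ σ m) (k : ℕ) : ∃ n, (k : ℝ) ≤ g b σ (b n) := by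
  induction k with
  | zero => exact ⟨0, by simpa using g_nonneg b σ (b 0)⟩
  | succ k ih =>
    obtain ⟨n, hn⟩ := ih
    obtain ⟨m, hnm, hσm⟩ := hσ n
    have h1 : g b σ (b n) ≤ g b σ (b m) := g_mono b σ ((b_strictMono hb).monotone hnm)
    have h2 := g_block_growth hb0 hb hσm
    exact ⟨m + 1, by push_cast; linarith⟩

lemma g_tendsto_atTop (hb0 : b 0 = 0) (hb : ∀ n, b n + 1 ≤ b (n + 1)) {σ : ℕ → Prop}
    (hσ : ∀ n, ∃ m, n ≤ m ∧ σ m) : Tendsto (g b σ) atTop atTop := by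
  refine tendsto_atTop_atTop_of_monotone (g_mono b σ) fun M => ?_
  obtain ⟨k, hk⟩ := exists_nat_ge M
  obtain ⟨n, hn⟩ := g_unbounded hb0 hb hσ k
  exact ⟨b n, le_trans hk hn⟩

end blocks

section stieltjes

/-- The distribution function `x ↦ 1 - exp (-(g b σ (R x)))` as a Stieltjes function. -/
noncomputable def phi (b : ℕ → ℝ) (σ : ℕ → Prop) (R : ℝ → ℝ) (hRmono : Monotone R)
    (hRrc : ∀ x, ContinuousWithinAt R (Set.Ici x) x) : StieltjesFunction ℝ where
  toFun := fun x => 1 - Real.exp (-(g b σ (R x)))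
  mono' := fun x y hxy => by
    have h := g_mono b σ (hRmono hxy)
    have h2 := Real.exp_le_exp.2 (neg_le_neg h)
    dsimp only
    linarith
  right_continuous' := fun x => by
    have houter : Continuous fun t : ℝ => 1 - Real.exp (-(g b σ t)) := by
      exact continuous_const.sub (Real.continuous_exp.comp ((g_lipschitz b σ).continuous.neg))
    exact houter.continuousAt.comp_continuousWithinAt (hRrc x)

theorem heavy_measure_exists
    (R : ℝ → ℝ) (hRmono : Monotone R) (hR0 : ∀ x, 0 ≤ R x)
    (hRrc : ∀ x, ContinuousWithinAt R (Set.Ici x) x)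
    (hRbot : Tendsto R atBot (𝓝 0)) (hRtop : Tendsto R atTop atTop)
    (b : ℕ → ℝ) (hb0 : b 0 = 0) (hb : ∀ n, b n + 1 ≤ b (n + 1))
    (hbR : ∀ n : ℕ, R (n * (b n + 1)) ≤ b (n + 1))
    (σ : ℕ → Prop) (hσtop : ∀ n, ∃ m, n ≤ m ∧ σ m) (hσflat : ∀ n, ∃ m, n ≤ m ∧ ¬ σ m) :
    ∃ H : Measure ℝ, IsProbabilityMeasure H ∧
      (∀ x, H (Set.Ioi x) = ENNReal.ofReal (Real.exp (-(g b σ (R x))))) ∧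
      (∀ l : ℝ, 0 < l → ∫⁻ x, ENNReal.ofReal (Real.exp (l * x)) ∂H = ⊤) := by
  set f := phi b σ R hRmono hRrc with hf
  have hfx : ∀ x, f x = 1 - Real.exp (-(g b σ (R x))) := fun x => rfl
  have houter : Continuous fun t : ℝ => 1 - Real.exp (-(g b σ t)) :=
    continuous_const.sub (Real.continuous_exp.comp ((g_lipschitz b σ).continuous.neg))
  -- tendsto at bot
  have hbot : Tendsto f atBot (𝓝 0) := by
    have h1 : Tendsto (fun x => 1 - Real.exp (-(g b σ (R x)))) atBot
        (𝓝 (1 - Real.exp (-(g b σ 0)))) := (houter.tendsto 0).comp hRbot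
    rw [g_zero b σ le_rfl] at h1
    simpa [← hfx] using h1
  -- tendsto at top
  have htop : Tendsto f atTop (𝓝 1) := by
    have h1 : Tendsto (fun x => g b σ (R x)) atTop atTop :=
      (g_tendsto_atTop hb0 hb hσtop).comp hRtop
    have h2 : Tendsto (fun x => Real.exp (-(g b σ (R x)))) atTop (𝓝 0) :=
      Real.tendsto_exp_atBot.comp (tendsto_neg_atTop_atBot.comp h1)
    have h3 := (tendsto_const_nhds (x := (1:ℝ)) (f := atTop)).sub h2
    simpa [← hfx] using h3
  have hprob : IsProbabilityMeasure f.measure :=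
    ⟨by rw [f.measure_univ hbot htop]; norm_num⟩
  have hexp_le_one : ∀ x, Real.exp (-(g b σ (R x))) ≤ 1 := fun x => by
    rw [← Real.exp_zero]
    exact Real.exp_le_exp.2 (by simpa using g_nonneg b σ (R x))
  have hIoi : ∀ x, f.measure (Set.Ioi x) = ENNReal.ofReal (Real.exp (-(g b σ (R x)))) := by
    intro x
    have hc : Set.Ioi x = (Set.Iic x)ᶜ := (Set.compl_Iic).symm
    rw [hc, measure_compl measurableSet_Iic (measure_ne_top _ _), hprob.measure_univ,
      f.measure_Iic hbot x, sub_zero, hfx x]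
    rw [show (1 : ℝ≥0∞) = ENNReal.ofReal 1 by simp,
      ← ENNReal.ofReal_sub 1 (by linarith [hexp_le_one x] : (0:ℝ) ≤ 1 - Real.exp (-(g b σ (R x))))]
    · congr 1
      ring
  refine ⟨f.measure, hprob, hIoi, fun l hl => ?_⟩
  refine ENNReal.eq_top_of_forall_nnreal_le fun r => ?_
  obtain ⟨n₀, hn₀⟩ := exists_nat_ge (max (r : ℝ) (2 / l))
  obtain ⟨m, hm, hσm⟩ := hσflat n₀
  have hbm : (m : ℝ) ≤ b m := b_ge hb0 hb m
  have hbm0 : (0 : ℝ) ≤ b m := le_trans (Nat.cast_nonneg m) hbm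
  set x₀ : ℝ := (m : ℝ) * (b m + 1) with hx₀
  have hlm : 2 ≤ l * m := by
    have h1 : 2 / l ≤ (n₀ : ℝ) := le_trans (le_max_right _ _) hn₀
    have h2 : (n₀ : ℝ) ≤ m := Nat.cast_le.2 hm
    rw [div_le_iff₀ hl] at h1
    nlinarith
  have harith : (m : ℝ) ≤ l * x₀ - b m := by
    have := mul_le_mul_of_nonneg_right hlm hbm0
    rw [hx₀]; nlinarith
  have hg_le : g b σ (R x₀) ≤ b m := by
    have h1 : R x₀ ≤ b (m + 1) := hbR m
    have h2 : g b σ (R x₀) ≤ g b σ (b (m + 1)) := g_mono b σ h1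
    rw [g_flat hb hσm (by linarith [hb m]) le_rfl] at h2
    exact le_trans h2 (g_le_of_nonneg b σ hbm0)
  have hrm : (r : ℝ) ≤ Real.exp (l * x₀ - b m) := by
    have h1 : (r : ℝ) ≤ n₀ := le_trans (le_max_left _ _) hn₀
    have h2 : (n₀ : ℝ) ≤ (m : ℝ) := Nat.cast_le.2 hm
    have h3 := Real.add_one_le_exp (l * x₀ - b m)
    linarith
  calc (r : ℝ≥0∞) = ENNReal.ofReal (r : ℝ) := by simp
    _ ≤ ENNReal.ofReal (Real.exp (l * x₀ - b m)) := ENNReal.ofReal_le_ofReal hrm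
    _ = ENNReal.ofReal (Real.exp (l * x₀)) * ENNReal.ofReal (Real.exp (-(b m))) := by
        rw [← ENNReal.ofReal_mul (Real.exp_nonneg _), ← Real.exp_add]
        ring_nf
    _ ≤ ENNReal.ofReal (Real.exp (l * x₀)) * ENNReal.ofReal (Real.exp (-(g b σ (R x₀)))) :=
        mul_le_mul_right (ENNReal.ofReal_le_ofReal (Real.exp_le_exp.2 (by linarith))) _
    _ = ENNReal.ofReal (Real.exp (l * x₀)) * f.measure (Set.Ioi x₀) := by rw [hIoi x₀]
    _ = ∫⁻ _ in Set.Ioi x₀, ENNReal.ofReal (Real.exp (l * x₀)) ∂f.measure := by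
        rw [setLIntegral_const]
    _ ≤ ∫⁻ x in Set.Ioi x₀, ENNReal.ofReal (Real.exp (l * x)) ∂f.measure := by
        refine setLIntegral_mono ?_ fun x hx => ?_
        · exact (Real.measurable_exp.comp (measurable_const.mul measurable_id)).ennreal_ofReal
        · exact ENNReal.ofReal_le_ofReal (Real.exp_le_exp.2
            (mul_le_mul_of_nonneg_left (le_of_lt hx) hl.le))
    _ ≤ ∫⁻ x, ENNReal.ofReal (Real.exp (l * x)) ∂f.measure := setLIntegral_le_lintegral _ _

end stieltjes

end HeavyMinAux

open HeavyMinAux in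
/-- **Corollary 1.** Any light-tailed probability distribution `F` on `ℝ`
with right-unbounded support is the distribution of the minimum of two independent
heavy-tailed random variables.  Here a distribution `H` is heavy-tailed if
`∫ exp (λ x) dH = ∞` for all `λ > 0`, and light-tailed if this integral is finite for
some `λ > 0`. -/
theorem light_tailed_is_min_of_two_heavy_tailed
    (F : Measure ℝ) [IsProbabilityMeasure F]
    (hF_unbounded : ∀ x : ℝ, F (Set.Iic x) < 1)
    (hF_light : ∃ l : ℝ, 0 < l ∧ ∫⁻ x, ENNReal.ofReal (Real.exp (l * x)) ∂F < ⊤) :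
    ∃ H₁ H₂ : Measure ℝ, IsProbabilityMeasure H₁ ∧ IsProbabilityMeasure H₂ ∧
      (∀ l : ℝ, 0 < l → ∫⁻ x, ENNReal.ofReal (Real.exp (l * x)) ∂H₁ = ⊤) ∧
      (∀ l : ℝ, 0 < l → ∫⁻ x, ENNReal.ofReal (Real.exp (l * x)) ∂H₂ = ⊤) ∧
      ∀ (Ω : Type) (mΩ : MeasurableSpace Ω) (μ : Measure Ω), IsProbabilityMeasure μ →
        ∀ ξ₁ ξ₂ : Ω → ℝ, Measurable ξ₁ → Measurable ξ₂ →
          μ.map ξ₁ = H₁ → μ.map ξ₂ = H₂ → IndepFun ξ₁ ξ₂ μ →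
          μ.map (fun ω => min (ξ₁ ω) (ξ₂ ω)) = F := by
  classical
  have hc_lt_one : ∀ x, cdf F x < 1 := fun x => by
    rw [cdf_eq_real, measureReal_def]
    have h := (ENNReal.toReal_lt_toReal (measure_ne_top F _) (by simp : (1 : ℝ≥0∞) ≠ ⊤)).2
      (hF_unbounded x)
    simpa using h
  have hpos : ∀ x, 0 < 1 - cdf F x := fun x => by linarith [hc_lt_one x]
  set R : ℝ → ℝ := fun x => -Real.log (1 - cdf F x) with hRdef
  have hRmono : Monotone R := by
    intro x y hxy
    have h1 : cdf F x ≤ cdf F y := (cdf F).mono hxy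
    have h2 := Real.log_le_log (hpos y) (by linarith : 1 - cdf F y ≤ 1 - cdf F x)
    simp only [hRdef]
    linarith
  have hR0 : ∀ x, 0 ≤ R x := fun x => by
    have := Real.log_nonpos (by linarith [hpos x]) (by linarith [cdf_nonneg F x] :
      1 - cdf F x ≤ 1)
    simp only [hRdef]
    linarith
  have houter : ∀ y : ℝ, y < 1 → ContinuousAt (fun t : ℝ => -Real.log (1 - t)) y := by
    intro y hy
    have h1 : ContinuousAt (fun t : ℝ => 1 - t) y := (continuous_const.sub continuous_id).continuousAt
    have h2 : ContinuousAt Real.log (1 - y) := Real.continuousAt_log (by linarith)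
    exact (h2.comp h1).neg
  have hRrc : ∀ x, ContinuousWithinAt R (Set.Ici x) x := fun x =>
    ((houter (cdf F x) (hc_lt_one x)).comp_continuousWithinAt ((cdf F).right_continuous' x))
  have hRbot : Tendsto R atBot (𝓝 0) := by
    have h1 := (houter 0 one_pos).tendsto.comp (tendsto_cdf_atBot F)
    simpa [hRdef, Function.comp_def] using h1
  have hRtop : Tendsto R atTop atTop := by
    have h1 : Tendsto (fun x => 1 - cdf F x) atTop (𝓝 0) := by
      have := (tendsto_const_nhds (x := (1 : ℝ)) (f := atTop)).sub (tendsto_cdf_atTop F)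
      simpa using this
    have h2 : Tendsto (fun x => 1 - cdf F x) atTop (𝓝[>] 0) :=
      tendsto_nhdsWithin_of_tendsto_nhds_of_eventually_within _ h1
        (Eventually.of_forall fun x => hpos x)
    have h3 : Tendsto (fun x => Real.log (1 - cdf F x)) atTop atBot :=
      Real.tendsto_log_nhdsGT_zero.comp h2
    have h4 : Tendsto (fun x => -Real.log (1 - cdf F x)) atTop atTop :=
      tendsto_neg_atBot_atTop.comp h3
    exact h4
  have hexpR : ∀ x, Real.exp (-(R x)) = 1 - cdf F x := fun x => by
    simp only [hRdef, neg_neg]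
    exact Real.exp_log (hpos x)
  -- the block sequence
  set b : ℕ → ℝ := fun n => Nat.rec (0 : ℝ) (fun n bn => R ((n : ℝ) * (bn + 1)) + bn + 1) n
    with hbdef
  have hb0 : b 0 = 0 := rfl
  have hbs : ∀ n : ℕ, b (n + 1) = R ((n : ℝ) * (b n + 1)) + b n + 1 := fun n => rfl
  have hb : ∀ n, b n + 1 ≤ b (n + 1) := fun n => by
    rw [hbs]; linarith [hR0 ((n : ℝ) * (b n + 1))]
  have hbR : ∀ n : ℕ, R ((n : ℝ) * (b n + 1)) ≤ b (n + 1) := fun n => by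
    rw [hbs]
    have := b_ge hb0 hb n
    have := Nat.cast_nonneg (α := ℝ) n
    linarith
  -- parity selections
  have hEtop : ∀ n : ℕ, ∃ m, n ≤ m ∧ Even m := fun n => ⟨2 * n, by omega, ⟨n, by omega⟩⟩
  have hEflat : ∀ n : ℕ, ∃ m, n ≤ m ∧ ¬ Even m := fun n =>
    ⟨2 * n + 1, by omega, by rintro ⟨r, hr⟩; omega⟩
  have hOtop : ∀ n : ℕ, ∃ m, n ≤ m ∧ ¬ Even m := hEflat
  have hOflat : ∀ n : ℕ, ∃ m, n ≤ m ∧ ¬ ¬ Even m := fun n =>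
    ⟨2 * n, by omega, not_not_intro ⟨n, by omega⟩⟩
  obtain ⟨H₁, hH₁p, hH₁Ioi, hH₁heavy⟩ :=
    heavy_measure_exists R hRmono hR0 hRrc hRbot hRtop b hb0 hb hbR
      (fun n => Even n) hEtop hEflat
  obtain ⟨H₂, hH₂p, hH₂Ioi, hH₂heavy⟩ :=
    heavy_measure_exists R hRmono hR0 hRrc hRbot hRtop b hb0 hb hbR
      (fun n => ¬ Even n) hOtop hOflat
  -- the survival functions multiply to that of F
  have hFIoi : ∀ x, F (Set.Ioi x) = ENNReal.ofReal (1 - cdf F x) := fun x => by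
    rw [← Set.compl_Iic, measure_compl measurableSet_Iic (measure_ne_top F _),
      measure_univ, ← ofReal_cdf F x,
      show (1 : ℝ≥0∞) = ENNReal.ofReal 1 by simp,
      ← ENNReal.ofReal_sub 1 (cdf_nonneg F x)]
  have hprod : ∀ x, H₁ (Set.Ioi x) * H₂ (Set.Ioi x) = F (Set.Ioi x) := fun x => by
    rw [hH₁Ioi, hH₂Ioi, ← ENNReal.ofReal_mul (Real.exp_nonneg _), ← Real.exp_add]
    have hadd := g_add hb0 hb (fun n => Even n) (hR0 x)
    have hsum : -(g b (fun n => Even n) (R x)) + -(g b (fun n => ¬ Even n) (R x)) = -(R x) := by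
      linarith
    rw [hsum, hexpR x, hFIoi x]
  refine ⟨H₁, H₂, hH₁p, hH₂p, hH₁heavy, hH₂heavy, ?_⟩
  intro Ω mΩ μ hμ ξ₁ ξ₂ hm₁ hm₂ hmap₁ hmap₂ hind
  have hmmin : Measurable fun ω => min (ξ₁ ω) (ξ₂ ω) := hm₁.min hm₂
  have hmapprob : IsProbabilityMeasure (μ.map fun ω => min (ξ₁ ω) (ξ₂ ω)) :=
    Measure.isProbabilityMeasure_map hmmin.aemeasurable
  have hIoi : ∀ x, (μ.map fun ω => min (ξ₁ ω) (ξ₂ ω)) (Set.Ioi x) = F (Set.Ioi x) := by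
    intro x
    rw [Measure.map_apply hmmin measurableSet_Ioi]
    have hpre : (fun ω => min (ξ₁ ω) (ξ₂ ω)) ⁻¹' Set.Ioi x
        = ξ₁ ⁻¹' Set.Ioi x ∩ ξ₂ ⁻¹' Set.Ioi x := by
      ext ω
      simp [lt_min_iff]
    rw [hpre, hind.measure_inter_preimage_eq_mul _ _ measurableSet_Ioi measurableSet_Ioi,
      ← Measure.map_apply hm₁ measurableSet_Ioi, ← Measure.map_apply hm₂ measurableSet_Ioi,
      hmap₁, hmap₂]
    exact hprod x
  refine Measure.ext_of_Iic _ _ fun x => ?_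
  have h1 : (μ.map fun ω => min (ξ₁ ω) (ξ₂ ω)) (Set.Iic x)
      = 1 - (μ.map fun ω => min (ξ₁ ω) (ξ₂ ω)) (Set.Ioi x) := by
    rw [← Set.compl_Ioi, measure_compl measurableSet_Ioi (measure_ne_top _ _), measure_univ]
  have h2 : F (Set.Iic x) = 1 - F (Set.Ioi x) := by
    rw [← Set.compl_Ioi, measure_compl measurableSet_Ioi (measure_ne_top _ _), measure_univ]
  rw [h1, h2, hIoi x]
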